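/- Let k be a commutative ring, G a group, U = U₀ ⊕ U₁ and V = V₀ ⊕ V₁ ℤ/2ℤ-graded k-modules, γ_U, γ_V : G × G → kˣ, and ξ_U, ξ_V : G → ℤ/2ℤ group homomorphisms. Let ρ_U : G → GL(U) and ρ_V : G → GL(V) be projective representations with multipliers γ_U and γ_V such that ρ_U(g)(U_i) ⊆ U_{i+ξ_U(g)} and ρ_V(g)(V_j) ⊆ V_{j+ξ_V(g)} for all g ∈ G and i,j ∈ ℤ/2ℤ. Define ρ(g) : U ⊗_k V → U ⊗_k V to be the k-linear map determined by ρ(g)(u ⊗ v) = (−1)^{ξ_U(g)·j}·(ρ_U(g)u) ⊗ (ρ_V(g)v) for u ∈ U and homogeneous v ∈ V_j. Then ρ(f) ∘ ρ(g) = (−1)^{ξ_U(f)·ξ_V(g)}·γ_U(f,g)·γ_V(f,g)·ρ(f·g) for all f,g ∈ G; that is, ρ is a projective representation of G on U ⊗_k V with multiplier (f,g) ↦ (−1)^{ξ_U(f)ξ_V(g)}·γ_U(f,g)·γ_V(f,g). -/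

import Mathlib

open scoped TensorProduct

lemma sign_mul_aux {k : Type*} [CommRing k] (a b : ZMod 2) :
    (-1 : k) ^ a.val * (-1 : k) ^ b.val = (-1 : k) ^ (a + b).val := by
  rw [← pow_add, ZMod.val_add, ← neg_one_pow_eq_pow_mod_two]


/-- Tensor product of two super (ℤ/2ℤ-graded) projective representations: if `ρ_U, ρ_V` are
projective representations with multipliers `γ_U, γ_V` whose actions shift the gradings by
group homomorphisms `ξ_U, ξ_V : G → ℤ/2ℤ`, then the map `ρ` on `U ⊗ V` determined by
`ρ(g)(u ⊗ v) = (−1)^{ξ_U(g)·j}·ρ_U(g)u ⊗ ρ_V(g)v` (`v` homogeneous of degree `j`) is a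
projective representation with multiplier `(f,g) ↦ (−1)^{ξ_U(f)ξ_V(g)}·γ_U(f,g)·γ_V(f,g)`. -/
theorem stmt_6 {k : Type*} [CommRing k] {G : Type*} [Group G]
    {U V : Type*} [AddCommGroup U] [Module k U] [AddCommGroup V] [Module k V]
    (𝒰 : ZMod 2 → Submodule k U) (𝒱 : ZMod 2 → Submodule k V)
    (hU : DirectSum.IsInternal 𝒰) (hV : DirectSum.IsInternal 𝒱)
    (γU γV : G → G → kˣ) (ξU ξV : G → ZMod 2)
    (hξU : ∀ f g : G, ξU (f * g) = ξU f + ξU g)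
    (hξV : ∀ f g : G, ξV (f * g) = ξV f + ξV g)
    (ρU : G → LinearMap.GeneralLinearGroup k U)
    (ρV : G → LinearMap.GeneralLinearGroup k V)
    (hρU : ∀ f g : G, (ρU f : U →ₗ[k] U) ∘ₗ (ρU g : U →ₗ[k] U) =
      (γU f g : k) • (ρU (f * g) : U →ₗ[k] U))
    (hρV : ∀ f g : G, (ρV f : V →ₗ[k] V) ∘ₗ (ρV g : V →ₗ[k] V) =
      (γV f g : k) • (ρV (f * g) : V →ₗ[k] V))
    (hgrU : ∀ (g : G) (i : ZMod 2), ∀ u ∈ 𝒰 i, (ρU g : U →ₗ[k] U) u ∈ 𝒰 (i + ξU g))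
    (hgrV : ∀ (g : G) (j : ZMod 2), ∀ v ∈ 𝒱 j, (ρV g : V →ₗ[k] V) v ∈ 𝒱 (j + ξV g))
    (ρ : G → (U ⊗[k] V →ₗ[k] U ⊗[k] V))
    (hρ : ∀ (g : G) (u : U) (j : ZMod 2), ∀ v ∈ 𝒱 j,
      ρ g (u ⊗ₜ[k] v) =
        ((-1 : k) ^ (ξU g * j).val) •
          (((ρU g : U →ₗ[k] U) u) ⊗ₜ[k] ((ρV g : V →ₗ[k] V) v))) :
    ∀ f g : G, (ρ f) ∘ₗ (ρ g) =
      ((-1 : k) ^ (ξU f * ξV g).val * (γU f g : k) * (γV f g : k)) • ρ (f * g) := by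
  intro f g
  apply TensorProduct.ext'
  intro u v
  simp only [LinearMap.comp_apply, LinearMap.smul_apply]
  have hv : v ∈ (⨆ j, 𝒱 j) := by
    rw [hV.submodule_iSup_eq_top]; trivial
  refine Submodule.iSup_induction (motive := fun v =>
      (ρ f) ((ρ g) (u ⊗ₜ[k] v)) =
        ((-1 : k) ^ (ξU f * ξV g).val * ↑(γU f g) * ↑(γV f g)) • (ρ (f * g)) (u ⊗ₜ[k] v))
      𝒱 hv ?_ ?_ ?_
  · intro j v hv
    have hA := hρU f g
    have hB := hρV f g
    have hAu := congrArg (fun L => L u) hA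
    have hBv := congrArg (fun L => L v) hB
    simp only [LinearMap.comp_apply, LinearMap.smul_apply] at hAu hBv
    rw [hρ g u j v hv, map_smul,
      hρ f ((ρU g : U →ₗ[k] U) u) (j + ξV g) _ (hgrV g j v hv),
      hρ (f * g) u j v hv, hAu, hBv]
    simp only [TensorProduct.smul_tmul', TensorProduct.tmul_smul, smul_smul]
    have key : ξU g * j + ξU f * (j + ξV g) = ξU f * ξV g + ξU (f * g) * j := by
      rw [hξU]; ring
    have e1 : (-1:k) ^ (ξU g * j).val * (-1:k) ^ (ξU f * (j + ξV g)).val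
        = (-1:k) ^ (ξU f * ξV g).val * (-1:k) ^ (ξU (f * g) * j).val := by
      rw [sign_mul_aux, sign_mul_aux, key]
    have hs : ((-1:k) ^ (ξU g * j).val * ((-1:k) ^ (ξU f * (j + ξV g)).val *
          ((γV f g : k) * (γU f g : k))))
        = ((-1:k) ^ (ξU f * ξV g).val * (γU f g : k) * (γV f g : k) *
          (-1:k) ^ (ξU (f * g) * j).val) := by
      linear_combination ((γU f g : k) * (γV f g : k)) * e1
    rw [hs]
  · simp
  · intro x y hx hy
    simp [TensorProduct.tmul_add, hx, hy]
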